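/- Primitivity of the lattice spanned by E_{i_j}/g_j and v: Let 2 ≤ j ≤ n−1 and let a, b ∈ ℤ satisfy a·i_j + b·g_{j−1} = g_j. Define v ∈ ℤ^{n+1} by v_0 = 0, v_k = a·i_k/g_{j−1} for 1 ≤ k ≤ j−1, and v_k = −b for j ≤ k ≤ n. Then every nonzero 2×2 minor of the 2×(n+1) integer matrix with rows E_{i_j}/g_j and v equals ±i_k/g_{j−1} for some 1 ≤ k ≤ j−1; in particular the gcd of all 2×2 minors equals 1, so ℤ·(E_{i_j}/g_j) + ℤ·v is a saturated (primitive) rank-2 sublattice of ℤ^{n+1}. -/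

import Mathlib

/-- Primitivity of the lattice spanned by `E_{i_j}/g_j` and `v`.
Every nonzero 2×2 minor of the 2×(n+1) matrix with rows `E_{i_j}/g_j` and `v`
equals `±i_t/g_{j-1}` for some `1 ≤ t ≤ j-1`; the gcd of all 2×2 minors is `1`;
and `ℤ·(E_{i_j}/g_j) + ℤ·v` is a saturated rank-2 sublattice of `ℤ^{n+1}`. -/
theorem primitivity_of_E_v_lattice
    (n : ℕ) (hn : 4 ≤ n) (i : ℕ → ℤ)
    (hi0 : i 0 = 0)
    (hmono : ∀ k, k < n → i k < i (k + 1))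
    (hgcd : Finset.gcd (Finset.Icc 1 n) i = 1)
    (j : ℕ) (hj2 : 2 ≤ j) (hjn : j ≤ n - 1)
    (a b : ℤ)
    (hab : a * i j + b * Finset.gcd (Finset.Icc 1 (j - 1)) i
            = Finset.gcd (Finset.Icc 1 j) i)
    (u v : Fin (n + 1) → ℤ)
    (hu : u = fun k : Fin (n + 1) => (if (k : ℕ) < j then i (k : ℕ) else i j)
                / Finset.gcd (Finset.Icc 1 j) i)
    (hv : v = fun k : Fin (n + 1) => if (k : ℕ) < j
                then a * i (k : ℕ) / Finset.gcd (Finset.Icc 1 (j - 1)) i else -b) :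
    (∀ k k' : Fin (n + 1),
        u k * v k' - u k' * v k ≠ 0 →
        ∃ t, 1 ≤ t ∧ t ≤ j - 1 ∧
          (u k * v k' - u k' * v k = i t / Finset.gcd (Finset.Icc 1 (j - 1)) i ∨
           u k * v k' - u k' * v k = -(i t / Finset.gcd (Finset.Icc 1 (j - 1)) i)))
    ∧ Finset.gcd Finset.univ
        (fun p : Fin (n + 1) × Fin (n + 1) => u p.1 * v p.2 - u p.2 * v p.1) = 1
    ∧ (∀ (c : ℤ) (w : Fin (n + 1) → ℤ), c ≠ 0 →
        c • w ∈ Submodule.span ℤ ({u, v} : Set (Fin (n + 1) → ℤ)) →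
        w ∈ Submodule.span ℤ ({u, v} : Set (Fin (n + 1) → ℤ))) := by
  set G : ℤ := Finset.gcd (Finset.Icc 1 (j - 1)) i with hGdef
  set H : ℤ := Finset.gcd (Finset.Icc 1 j) i with hHdef
  -- positivity of i on [1, n]
  have hipos : ∀ k : ℕ, 1 ≤ k → k ≤ n → 0 < i k := by
    intro k hk1 hkn
    induction k with
    | zero => omega
    | succ m ih =>
      rcases Nat.eq_zero_or_pos m with hm | hm
      · subst hm
        have := hmono 0 (by omega)
        simpa [hi0] using this
      · have h1 := hmono m (by omega)
        have h2 := ih (by omega) (by omega)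
        omega
  -- divisibility facts
  have hHdvd : ∀ k : ℕ, k ≤ j → H ∣ i k := by
    intro k hk
    rcases Nat.eq_zero_or_pos k with hk0 | hk0
    · subst hk0; simp [hi0]
    · exact Finset.gcd_dvd (Finset.mem_Icc.mpr ⟨hk0, hk⟩)
  have hGdvd : ∀ k : ℕ, k ≤ j - 1 → G ∣ i k := by
    intro k hk
    rcases Nat.eq_zero_or_pos k with hk0 | hk0
    · subst hk0; simp [hi0]
    · exact Finset.gcd_dvd (Finset.mem_Icc.mpr ⟨hk0, hk⟩)
  have hHG : H ∣ G := by
    apply Finset.dvd_gcd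
    intro k hk
    have hk' := Finset.mem_Icc.mp hk
    exact hHdvd k (by omega)
  have hGnn : 0 ≤ G := by
    rw [hGdef, ← Finset.normalize_gcd, ← Int.abs_eq_normalize]
    exact abs_nonneg _
  have hHnn : 0 ≤ H := by
    rw [hHdef, ← Finset.normalize_gcd, ← Int.abs_eq_normalize]
    exact abs_nonneg _
  have hi1 : 0 < i 1 := hipos 1 le_rfl (by omega)
  have hGne : G ≠ 0 := by
    intro h0
    have := hGdvd 1 (by omega)
    rw [h0] at this
    rw [zero_dvd_iff] at this
    omega
  have hHne : H ≠ 0 := by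
    intro h0
    have := hHdvd 1 (by omega)
    rw [h0] at this
    rw [zero_dvd_iff] at this
    omega
  set E : ℤ := G / H with hEdef
  set F : ℤ := i j / H with hFdef
  have hGE : G = H * E := (Int.mul_ediv_cancel' hHG).symm
  have hiF : i j = H * F := (Int.mul_ediv_cancel' (hHdvd j le_rfl)).symm
  have hc : ∀ k : ℕ, k ≤ j - 1 → i k = G * (i k / G) :=
    fun k hk => (Int.mul_ediv_cancel' (hGdvd k hk)).symm
  -- Bezout: a * F + b * E = 1
  have hbez : a * F + b * E = 1 := by
    have h1 : H * (a * F + b * E) = H * 1 := by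
      rw [mul_one]
      calc H * (a * F + b * E) = a * (H * F) + b * (H * E) := by ring
        _ = a * i j + b * G := by rw [← hiF, ← hGE]
        _ = H := hab
    exact mul_left_cancel₀ hHne h1
  -- values of u and v
  have huk : ∀ k : Fin (n + 1), (k : ℕ) < j → u k = E * (i k / G) := by
    intro k hk
    rw [hu]
    simp only [if_pos hk]
    have h1 : i (k : ℕ) = H * (E * (i k / G)) := by
      rw [← mul_assoc, ← hGE]
      exact hc k (by omega)
    nth_rewrite 1 [h1]
    rw [Int.mul_ediv_cancel_left _ hHne]
  have huk' : ∀ k : Fin (n + 1), j ≤ (k : ℕ) → u k = F := by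
    intro k hk
    rw [hu]
    simp only [if_neg (by omega : ¬ (k : ℕ) < j)]
    rfl
  have hvk : ∀ k : Fin (n + 1), (k : ℕ) < j → v k = a * (i k / G) := by
    intro k hk
    rw [hv]
    simp only [if_pos hk]
    exact Int.mul_ediv_assoc a (hGdvd k (by omega))
  have hvk' : ∀ k : Fin (n + 1), j ≤ (k : ℕ) → v k = -b := by
    intro k hk
    rw [hv]
    simp only [if_neg (by omega : ¬ (k : ℕ) < j)]
  -- minor values
  have hMmix : ∀ k k' : Fin (n + 1), (k : ℕ) < j → j ≤ (k' : ℕ) →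
      u k * v k' - u k' * v k = -(i k / G) := by
    intro k k' hk hk'
    rw [huk k hk, hvk' k' hk', huk' k' hk', hvk k hk]
    have : E * (i k / G) * (-b) - F * (a * (i k / G))
        = -((a * F + b * E) * (i k / G)) := by ring
    rw [this, hbez, one_mul]
  have hM0a : ∀ k k' : Fin (n + 1), (k : ℕ) < j → (k' : ℕ) < j →
      u k * v k' - u k' * v k = 0 := by
    intro k k' hk hk'
    rw [huk k hk, hvk k hk, huk k' hk', hvk k' hk']
    ring
  have hM0b : ∀ k k' : Fin (n + 1), j ≤ (k : ℕ) → j ≤ (k' : ℕ) →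
      u k * v k' - u k' * v k = 0 := by
    intro k k' hk hk'
    rw [huk' k hk, hvk' k hk, huk' k' hk', hvk' k' hk']
    ring
  -- gcd of i k / G over Icc 1 (j-1) is 1
  have hD : Finset.gcd (Finset.Icc 1 (j - 1)) (fun k => i k / G) = 1 := by
    set D := Finset.gcd (Finset.Icc 1 (j - 1)) (fun k => i k / G) with hDdef
    have hDnn : 0 ≤ D := by
      rw [hDdef, ← Finset.normalize_gcd, ← Int.abs_eq_normalize]
      exact abs_nonneg _
    have key : G * D ∣ G * 1 := by
      rw [mul_one, hGdef]
      apply Finset.dvd_gcd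
      intro k hk
      have hk' := Finset.mem_Icc.mp hk
      have h1 : D ∣ i k / G := Finset.gcd_dvd hk
      have h2 : G * D ∣ G * (i k / G) := mul_dvd_mul_left G h1
      rwa [← hc k hk'.2] at h2
    have hD1 : D ∣ 1 := (mul_dvd_mul_iff_left hGne).mp key
    rcases Int.isUnit_iff.mp (isUnit_of_dvd_one hD1) with h | h
    · exact h
    · omega
  have hjn' : j < n + 1 := by omega
  refine ⟨?_, ?_, ?_⟩
  · -- first conjunct: classification of nonzero minors
    intro k k' hne
    rcases lt_or_ge (k : ℕ) j with hk | hk <;> rcases lt_or_ge (k' : ℕ) j with hk' | hk'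
    · exact absurd (hM0a k k' hk hk') hne
    · -- k < j ≤ k'
      have hM := hMmix k k' hk hk'
      have hk1 : 1 ≤ (k : ℕ) := by
        by_contra h0
        have : (k : ℕ) = 0 := by omega
        rw [hM, this, hi0] at hne
        simp at hne
      exact ⟨(k : ℕ), hk1, by omega, Or.inr hM⟩
    · -- k' < j ≤ k
      have hM := hMmix k' k hk' hk
      have hk1 : 1 ≤ (k' : ℕ) := by
        by_contra h0
        have h00 : (k' : ℕ) = 0 := by omega
        rw [h00, hi0] at hM
        simp at hM
        apply hne
        linarith
      refine ⟨(k' : ℕ), hk1, by omega, Or.inl ?_⟩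
      linarith
    · exact absurd (hM0b k k' hk hk') hne
  · -- second conjunct: gcd of all minors is 1
    set d := Finset.gcd Finset.univ
        (fun p : Fin (n + 1) × Fin (n + 1) => u p.1 * v p.2 - u p.2 * v p.1) with hddef
    have hdnn : 0 ≤ d := by
      rw [hddef, ← Finset.normalize_gcd, ← Int.abs_eq_normalize]
      exact abs_nonneg _
    have hdD : d ∣ Finset.gcd (Finset.Icc 1 (j - 1)) (fun k => i k / G) := by
      apply Finset.dvd_gcd
      intro k hk
      have hk' := Finset.mem_Icc.mp hk
      set kf : Fin (n + 1) := ⟨k, by omega⟩ with hkf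
      set jf : Fin (n + 1) := ⟨j, hjn'⟩ with hjf
      have h1 : d ∣ u kf * v jf - u jf * v kf :=
        Finset.gcd_dvd (Finset.mem_univ (kf, jf))
      rw [hMmix kf jf (by simpa [hkf] using by omega : (kf : ℕ) < j)
        (le_refl j : j ≤ (jf : ℕ))] at h1
      exact (dvd_neg).mp h1
    rw [hD] at hdD
    rcases Int.isUnit_iff.mp (isUnit_of_dvd_one hdD) with h | h
    · exact h
    · omega
  · -- third conjunct: saturation
    intro c w hc0 hmem
    rw [Submodule.mem_span_pair] at hmem
    obtain ⟨x, y, hxy⟩ := hmem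
    have hpt : ∀ k : Fin (n + 1), x * u k + y * v k = c * w k := by
      intro k
      have := congrFun hxy k
      simpa using this
    set jf : Fin (n + 1) := ⟨j, hjn'⟩ with hjf
    have hcx : c ∣ x := by
      have hdvd : c ∣ Finset.gcd (Finset.Icc 1 (j - 1)) (fun k => x * (i k / G)) := by
        apply Finset.dvd_gcd
        intro k hk
        have hk' := Finset.mem_Icc.mp hk
        set kf : Fin (n + 1) := ⟨k, by omega⟩ with hkf
        have hkfj : (kf : ℕ) < j := by simp [hkf]; omega
        have hM := hMmix kf jf hkfj (le_refl j)
        have h1 := hpt kf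
        have h2 := hpt jf
        have e1 : c * (w jf * v kf - w kf * v jf) = x * (i k / G) := by
          have step : c * (w jf * v kf - w kf * v jf)
              = (c * w jf) * v kf - (c * w kf) * v jf := by ring
          rw [step, ← h1, ← h2]
          have : (x * u jf + y * v jf) * v kf - (x * u kf + y * v kf) * v jf
              = -(x * (u kf * v jf - u jf * v kf)) := by ring
          rw [this, hM]
          ring
        exact ⟨_, e1.symm⟩
      rw [Finset.gcd_mul_left, hD, mul_one, ← Int.abs_eq_normalize] at hdvd
      exact (dvd_abs c x).mp hdvd
    have hcy : c ∣ y := by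
      have hdvd : c ∣ Finset.gcd (Finset.Icc 1 (j - 1)) (fun k => y * (i k / G)) := by
        apply Finset.dvd_gcd
        intro k hk
        have hk' := Finset.mem_Icc.mp hk
        set kf : Fin (n + 1) := ⟨k, by omega⟩ with hkf
        have hkfj : (kf : ℕ) < j := by simp [hkf]; omega
        have hM := hMmix kf jf hkfj (le_refl j)
        have h1 := hpt kf
        have h2 := hpt jf
        have e1 : c * (w kf * u jf - w jf * u kf) = y * (i k / G) := by
          have step : c * (w kf * u jf - w jf * u kf)
              = (c * w kf) * u jf - (c * w jf) * u kf := by ring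
          rw [step, ← h1, ← h2]
          have : (x * u kf + y * v kf) * u jf - (x * u jf + y * v jf) * u kf
              = -(y * (u kf * v jf - u jf * v kf)) := by ring
          rw [this, hM]
          ring
        exact ⟨_, e1.symm⟩
      rw [Finset.gcd_mul_left, hD, mul_one, ← Int.abs_eq_normalize] at hdvd
      exact (dvd_abs c y).mp hdvd
    obtain ⟨x', rfl⟩ := hcx
    obtain ⟨y', rfl⟩ := hcy
    have hxy' : c • (x' • u + y' • v) = c • w := by
      rw [smul_add, ← mul_smul, ← mul_smul]
      exact hxy
    have hw : x' • u + y' • v = w := smul_right_injective _ hc0 hxy'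
    rw [Submodule.mem_span_pair]
    exact ⟨x', y', hw⟩
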